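/- arXiv:2003.01052 — 3 statements merged into one kernel-verified Lean document; each statement's English description precedes it below -/
import Mathlib

section
/- Closeness centrality satisfies the Bridge axiom: if {u,v} is a bridge in a connected graph G separating it into components with vertex sets V_u ∋ u and V_v ∋ v, then |V_u| < |V_v| implies f(u) < f(v), where f(x) = (Σ_{y∈V} d(x,y))^{-1}. -/
open SimpleGraph Finset

private lemma bridge_dist_aux {V : Type} (G : SimpleGraph V) (hG : G.Connected)
    (u v : V) (hadj : G.Adj u v)
    (hnr : ¬ (G.deleteEdges {s(u, v)}).Reachable u v)
    (x : V) (hx : (G.deleteEdges {s(u, v)}).Reachable u x) :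
    G.dist v x = G.dist u x + 1 := by
  classical
  have hd1 : G.dist v u = 1 := dist_eq_one_iff_adj.mpr hadj.symm
  have hub : G.dist v x ≤ G.dist u x + 1 := by
    have := hG.dist_triangle (u := v) (v := u) (w := x)
    omega
  have hvx : G.dist v x ≠ 0 := by
    rw [dist_ne_zero_iff_ne_and_reachable]
    refine ⟨fun h => ?_, hG.preconnected v x⟩
    subst h
    exact hnr hx
  obtain ⟨p, hp⟩ := exists_walk_of_dist_ne_zero hvx
  have hmem : s(u, v) ∈ p.edges := by
    by_contra hcon
    have hr : (G.deleteEdges {s(u, v)}).Reachable v x :=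
      ⟨p.toDeleteEdges _ (fun e he => by
        simp only [Set.mem_singleton_iff]
        rintro rfl
        exact hcon he)⟩
    exact hnr (hx.trans hr.symm)
  have hu : u ∈ p.support := p.fst_mem_support_of_mem_edges hmem
  have hspec := p.take_spec hu
  have hlen : (p.takeUntil u hu).length + (p.dropUntil u hu).length = p.length := by
    rw [← Walk.length_append, hspec]
  have h1 : G.dist v u ≤ (p.takeUntil u hu).length := dist_le _
  have h2 : G.dist u x ≤ (p.dropUntil u hu).length := dist_le _
  omega

/-- Closeness centrality satisfies the Bridge axiom: if `{u,v}` is a bridge in a finite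
connected graph `G`, separating it into components with vertex sets `V_u ∋ u` and
`V_v ∋ v`, then `|V_u| < |V_v|` iff `f(u) < f(v)`, where
`f(x) = (Σ_{y ∈ V} d(x,y))⁻¹`. -/
theorem closeness_bridge_axiom {V : Type} [Fintype V] (G : SimpleGraph V)
    (hG : G.Connected) (u v : V) (hb : G.IsBridge s(u, v)) :
    Nat.card {x | (G.deleteEdges {s(u, v)}).Reachable u x} <
        Nat.card {x | (G.deleteEdges {s(u, v)}).Reachable v x} ↔
      (∑ y, (G.dist u y : ℝ))⁻¹ < (∑ y, (G.dist v y : ℝ))⁻¹ := by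
  classical
  rw [isBridge_iff] at hb
  have hnr' := hb
  have hadj : G.Adj u v := by
    by_contra h
    apply hb
    have : G.deleteEdges {s(u, v)} = G := by
      rw [deleteEdges_eq_self]; simpa using h
    rw [this]; exact hG.preconnected u v
  set G' := G.deleteEdges {s(u, v)} with hG'def
  have hnr : ¬ G'.Reachable u v := hnr'
  -- every vertex is reachable from u or from v in G'
  have hpart : ∀ x : V, G'.Reachable u x ∨ G'.Reachable v x := by
    intro x
    obtain ⟨p⟩ := hG.preconnected u x
    have aux : ∀ {a b : V} (q : G.Walk a b),
        (G'.Reachable u a ∨ G'.Reachable v a) → (G'.Reachable u b ∨ G'.Reachable v b) := by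
      intro a b q
      induction q with
      | nil => exact fun h => h
      | @cons a c b hac q ih =>
        intro h
        apply ih
        by_cases he : s(a, c) = s(u, v)
        · rw [Sym2.eq_iff] at he
          rcases he with ⟨rfl, rfl⟩ | ⟨rfl, rfl⟩
          · exact Or.inr (Reachable.refl _)
          · exact Or.inl (Reachable.refl _)
        · have hadj' : G'.Adj a c := by
            rw [hG'def, deleteEdges_adj]
            exact ⟨hac, by simpa using he⟩
          rcases h with h | h
          · exact Or.inl (h.trans hadj'.reachable)
          · exact Or.inr (h.trans hadj'.reachable)
    exact aux p (Or.inl (Reachable.refl _))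
  have hexcl : ∀ x : V, ¬ G'.Reachable u x → G'.Reachable v x := fun x hx =>
    (hpart x).resolve_left hx
  have hnot : ∀ x : V, G'.Reachable v x → ¬ G'.Reachable u x := by
    intro x hvx hux
    exact hnr (hux.trans hvx.symm)
  -- distance identities
  have hdu : ∀ x : V, G'.Reachable u x → G.dist v x = G.dist u x + 1 :=
    fun x hx => bridge_dist_aux G hG u v hadj hnr x hx
  have hnrvu : ¬ (G.deleteEdges {s(v, u)}).Reachable v u := by
    rw [Sym2.eq_swap]
    exact fun h => hnr h.symm
  have hdv : ∀ x : V, ¬ G'.Reachable u x → G.dist u x = G.dist v x + 1 := by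
    intro x hx
    have hvx : (G.deleteEdges {s(v, u)}).Reachable v x := by
      rw [Sym2.eq_swap]; exact hexcl x hx
    exact bridge_dist_aux G hG v u hadj.symm hnrvu x hvx
  -- counting
  set P : V → Prop := fun x => G'.Reachable u x with hP
  have hcardu : Nat.card {x | G'.Reachable u x} = (univ.filter P).card := by
    rw [Nat.card_eq_fintype_card]
    simp [Set.setOf_mem_eq, P]
  have hcardv : Nat.card {x | G'.Reachable v x} = (univ.filter (fun x => ¬ P x)).card := by
    rw [Nat.card_eq_fintype_card]
    have : ∀ x : V, G'.Reachable v x ↔ ¬ P x := fun x => ⟨hnot x, hexcl x⟩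
    calc Fintype.card {x | G'.Reachable v x}
        = Fintype.card {x // ¬ P x} := Fintype.card_congr
          (Equiv.subtypeEquivRight (by simpa using this))
      _ = (univ.filter (fun x => ¬ P x)).card := Fintype.card_subtype _
  -- sum identity over ℕ
  have hsum : (∑ y, G.dist u y) + (univ.filter P).card
      = (∑ y, G.dist v y) + (univ.filter (fun x => ¬ P x)).card := by
    rw [← Finset.sum_filter_add_sum_filter_not univ P (fun y => G.dist u y),
        ← Finset.sum_filter_add_sum_filter_not univ P (fun y => G.dist v y)]
    have h1 : ∑ y ∈ univ.filter (fun x => P x), G.dist v y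
        = (∑ y ∈ univ.filter (fun x => P x), G.dist u y) + (univ.filter (fun x => P x)).card := by
      rw [Finset.card_eq_sum_ones, ← Finset.sum_add_distrib]
      exact Finset.sum_congr rfl fun y hy => hdu y (by simpa [P] using (Finset.mem_filter.mp hy).2)
    have h2 : ∑ y ∈ univ.filter (fun x => ¬ P x), G.dist u y
        = (∑ y ∈ univ.filter (fun x => ¬ P x), G.dist v y)
          + (univ.filter (fun x => ¬ P x)).card := by
      rw [Finset.card_eq_sum_ones, ← Finset.sum_add_distrib]
      exact Finset.sum_congr rfl fun y hy => hdv y (by simpa [P] using (Finset.mem_filter.mp hy).2)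
    have hc : (univ.filter P).card = (univ.filter (fun x => P x)).card := rfl
    rw [hc]
    omega
  -- positivity
  have hne : u ≠ v := hadj.ne
  have hpu : 0 < ∑ y, G.dist u y := by
    have h1 : G.dist u v = 1 := dist_eq_one_iff_adj.mpr hadj
    have := Finset.single_le_sum (f := fun y => G.dist u y)
      (fun i _ => Nat.zero_le _) (Finset.mem_univ v)
    omega
  have hpv : 0 < ∑ y, G.dist v y := by
    have h1 : G.dist v u = 1 := dist_eq_one_iff_adj.mpr hadj.symm
    have := Finset.single_le_sum (f := fun y => G.dist v y)
      (fun i _ => Nat.zero_le _) (Finset.mem_univ u)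
    omega
  rw [hcardu, hcardv]
  have hcast : ∀ w : V, ∑ y, (G.dist w y : ℝ) = ((∑ y, G.dist w y : ℕ) : ℝ) := by
    intro w; push_cast; ring
  rw [hcast u, hcast v,
    inv_lt_inv₀ (by exact_mod_cast hpu) (by exact_mod_cast hpv), Nat.cast_lt]
  omega
end

section
/- Degree centrality violates the Bridge axiom: there exists a connected graph with a bridge {u,v} such that the component containing u is strictly smaller than the one containing v, yet deg(u) ≥ deg(v). -/
def adjL : List (ℕ × ℕ) := [(0,1),(0,2),(0,3),(3,4),(4,5),(5,6)]

def myG : SimpleGraph (Fin 7) where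
  Adj a b := (a.1, b.1) ∈ adjL ∨ (b.1, a.1) ∈ adjL
  symm := ⟨fun a b h => h.symm⟩
  loopless := ⟨fun a h => (by revert a; decide :
    ∀ a : Fin 7, ¬ ((a.1, a.1) ∈ adjL ∨ (a.1, a.1) ∈ adjL)) a h⟩

instance : DecidableRel myG.Adj := fun a b =>
  inferInstanceAs (Decidable (_ ∨ _))

instance (s : Set (Sym2 (Fin 7))) [DecidablePred (· ∈ s)] :
    DecidableRel (myG.deleteEdges s).Adj := fun a b =>
  decidable_of_iff _ SimpleGraph.deleteEdges_adj.symm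

/-- Degree centrality violates the Bridge axiom: there exists a finite connected graph
with a bridge `{u,v}` such that the component containing `u` is strictly smaller than
the one containing `v`, yet `deg(u) ≥ deg(v)`. -/
theorem degree_violates_bridge_axiom :
    ∃ (n : ℕ) (G : SimpleGraph (Fin n)) (u v : Fin n),
      G.Connected ∧ G.IsBridge s(u, v) ∧
      Nat.card {x | (G.deleteEdges {s(u, v)}).Reachable u x} <
        Nat.card {x | (G.deleteEdges {s(u, v)}).Reachable v x} ∧
      Nat.card {w | G.Adj v w} ≤ Nat.card {w | G.Adj u w} := by
  refine ⟨7, myG, 0, 3, ?_, ?_, ?_, ?_⟩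
  · rw [SimpleGraph.connected_iff]
    exact ⟨by decide, ⟨0⟩⟩
  · rw [SimpleGraph.isBridge_iff]
    show ¬ (myG.deleteEdges {s((0:Fin 7),3)}).Reachable 0 3
    decide
  · rw [Nat.card_eq_fintype_card, Nat.card_eq_fintype_card]
    decide
  · rw [Nat.card_eq_fintype_card, Nat.card_eq_fintype_card]
    decide
end

section
/- If P = (p_{xy}) is an n×n symmetric matrix defining a proximity measure (p_{xy} + p_{xz} − p_{yz} ≤ p_{xx} for all x,y,z, with strict inequality when z = y and y ≠ x), then d(u,v) = ½(p_{uu} + p_{vv} − p_{uv} − p_{vu}) is a metric: it is nonnegative, symmetric, zero exactly on the diagonal, and satisfies the triangle inequality. -/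
/-- The distance obtained from a proximity matrix: `d(u,v) = ½(p_uu + p_vv − p_uv − p_vu)`. -/
noncomputable def proxDist {n : ℕ} (P : Fin n → Fin n → ℝ) (u v : Fin n) : ℝ :=
  (P u u + P v v - P u v - P v u) / 2

/-- If a symmetric matrix `P` defines a proximity measure
(`p_xy + p_xz − p_yz ≤ p_xx` for all `x, y, z`, strictly when `z = y` and `y ≠ x`),
then `d(u,v) = ½(p_uu + p_vv − p_uv − p_vu)` is a metric: nonnegative, symmetric,
zero exactly on the diagonal, and satisfying the triangle inequality. -/
theorem proximity_gives_metric {n : ℕ} (P : Fin n → Fin n → ℝ)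
    (hsym : ∀ x y, P x y = P y x)
    (hprox : ∀ x y z, P x y + P x z - P y z ≤ P x x)
    (hstrict : ∀ x y, y ≠ x → P x y + P x y - P y y < P x x) :
    (∀ u v, 0 ≤ proxDist P u v) ∧
    (∀ u v, proxDist P u v = proxDist P v u) ∧
    (∀ u v, proxDist P u v = 0 ↔ u = v) ∧
    (∀ x y z, proxDist P x z ≤ proxDist P x y + proxDist P y z) := by
  refine ⟨?_, ?_, ?_, ?_⟩
  · intro u v
    have h := hprox u v v
    simp only [proxDist]
    linarith [hsym u v]
  · intro u v
    simp only [proxDist]; ring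
  · intro u v
    constructor
    · intro h
      by_contra hne
      have h1 := hstrict u v (Ne.symm hne)
      have h2 := hsym u v
      simp only [proxDist] at h
      linarith
    · rintro rfl
      simp [proxDist]
  · intro x y z
    have h := hprox y x z
    simp only [proxDist]
    linarith [hsym x y, hsym y z, hsym x z]
end
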